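/- arXiv:2104.04555 — 8 statements merged into one kernel-verified Lean document; each statement's English description precedes it below -/
import Mathlib

section
/- Let v : ℝ → ℝ be continuous, even, and 2π-periodic. Suppose there exists ε > 0 such that v(η + θ) ≥ v(η - θ) for all η ∈ (0, ε) and all θ ∈ (0, π). Then v is nondecreasing on (0, π). -/
open Real Set

theorem asymptotic_symmetry_stmt_0 (v : ℝ → ℝ) (hv : Continuous v)
    (heven : ∀ θ : ℝ, v (-θ) = v θ)
    (hper : ∀ θ : ℝ, v (θ + 2 * π) = v θ)
    (ε : ℝ) (hε : 0 < ε)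
    (hrefl : ∀ η θ : ℝ, 0 < η → η < ε → 0 < θ → θ < π → v (η - θ) ≤ v (η + θ)) :
    MonotoneOn v (Ioo 0 π) := by
  -- local step: if 0 < x < y < π and y - x < 2ε then v x ≤ v y
  have step : ∀ x y : ℝ, 0 < x → y < π → x < y → y - x < 2 * ε → v x ≤ v y := by
    intro x y hx hy hxy hlt
    have h := hrefl ((y - x) / 2) ((x + y) / 2) (by linarith) (by linarith)
      (by linarith) (by linarith)
    have e1 : (y - x) / 2 - (x + y) / 2 = -x := by ring
    have e2 : (y - x) / 2 + (x + y) / 2 = y := by ring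
    rw [e1, e2, heven] at h
    exact h
  intro a ha b hb hab
  rcases eq_or_lt_of_le hab with rfl | hab
  · exact le_rfl
  · obtain ⟨ha1, ha2⟩ := ha
    obtain ⟨hb1, hb2⟩ := hb
    obtain ⟨n, hn⟩ := exists_nat_gt ((b - a) / (2 * ε))
    have hn0 : 0 < (n : ℝ) := lt_of_le_of_lt (div_nonneg (by linarith) (by linarith)) hn
    set d : ℝ := (b - a) / n with hd
    have hd0 : 0 < d := by
      apply div_pos (by linarith) hn0
    have hdlt : d < 2 * ε := by
      rw [hd, div_lt_iff₀ hn0]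
      have := (div_lt_iff₀ (by linarith : (0:ℝ) < 2 * ε)).mp hn
      linarith [mul_comm (2 * ε) (n : ℝ)]
    have key : ∀ k : ℕ, k ≤ n → v a ≤ v (a + k * d) := by
      intro k hk
      induction k with
      | zero => simp
      | succ m ih =>
        have hm : m ≤ n := Nat.le_of_succ_le hk
        have h1 : v a ≤ v (a + m * d) := ih hm
        have hub : a + (m + 1 : ℕ) * d ≤ b := by
          have : ((m : ℝ) + 1) * d ≤ n * d := by
            apply mul_le_mul_of_nonneg_right _ hd0.le
            exact_mod_cast hk
          have hnd : (n : ℝ) * d = b - a := by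
            rw [hd]; field_simp
          push_cast
          linarith
        have h2 : v (a + m * d) ≤ v (a + (m + 1 : ℕ) * d) := by
          apply step
          · have : 0 ≤ (m : ℝ) * d := by positivity
            linarith
          · linarith
          · push_cast; linarith
          · push_cast; linarith
        exact h1.trans h2
    have := key n le_rfl
    have hnd : a + (n : ℝ) * d = b := by
      rw [hd]; field_simp; ring
    rwa [hnd] at this
end

section
/- Let v : ℝ → ℝ be continuous, even, and 2π-periodic. Suppose there exists ε > 0 such that v(η + θ) ≥ v(η - θ) for all η ∈ (0, ε) and all θ ∈ (0, π). Then v(η + θ) ≥ v(η - θ) for all η, θ ∈ (0, π). -/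
open Real Set

theorem asymptotic_symmetry_stmt_1 (v : ℝ → ℝ) (hv : Continuous v)
    (heven : ∀ θ : ℝ, v (-θ) = v θ)
    (hper : ∀ θ : ℝ, v (θ + 2 * π) = v θ)
    (ε : ℝ) (hε : 0 < ε)
    (hrefl : ∀ η θ : ℝ, 0 < η → η < ε → 0 < θ → θ < π → v (η - θ) ≤ v (η + θ)) :
    ∀ η ∈ Ioo (0:ℝ) π, ∀ θ ∈ Ioo (0:ℝ) π, v (η - θ) ≤ v (η + θ) := by
  have hπ := Real.pi_pos
  -- local step: short increments are nondecreasing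
  have step : ∀ a b : ℝ, 0 ≤ a → b ≤ π → a < b → b - a < 2 * ε → v a ≤ v b := by
    intro a b ha hb hab hsmall
    have h1 := hrefl ((b - a) / 2) ((a + b) / 2) (by linarith) (by linarith)
      (by linarith) (by linarith)
    have e1 : (b - a) / 2 - (a + b) / 2 = -a := by ring
    have e2 : (b - a) / 2 + (a + b) / 2 = b := by ring
    rw [e1, e2, heven] at h1
    exact h1
  -- v is nondecreasing on [0, π]
  have mono : ∀ a b : ℝ, 0 ≤ a → a ≤ b → b ≤ π → v a ≤ v b := by
    intro a b ha hab hb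
    rcases eq_or_lt_of_le hab with rfl | hab
    · exact le_rfl
    set T : Set ℝ := Icc a b ∩ {t | v a ≤ v t} with hT
    have hTne : a ∈ T := ⟨⟨le_refl a, le_of_lt hab⟩, le_refl (v a)⟩
    have hTclosed : IsClosed T := isClosed_Icc.inter (isClosed_le continuous_const hv)
    have hComp : IsCompact T :=
      isCompact_Icc.of_isClosed_subset hTclosed inter_subset_left
    set c := sSup T with hc
    have hcT : c ∈ T := hComp.sSup_mem ⟨a, hTne⟩
    obtain ⟨⟨hac, hcb⟩, hvac⟩ := hcT
    rcases eq_or_lt_of_le hcb with hcb' | hcb'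
    · rw [← hcb']; exact hvac
    · exfalso
      set t := min b (c + ε) with ht
      have htc : c < t := lt_min hcb' (by linarith)
      have htb : t ≤ b := min_le_left _ _
      have hvct : v c ≤ v t := by
        refine step c t (le_trans ha hac) (le_trans htb hb) htc ?_
        have : t ≤ c + ε := min_le_right _ _
        linarith
      have htT : t ∈ T := ⟨⟨le_trans hac (le_of_lt htc), htb⟩, le_trans hvac hvct⟩
      have : t ≤ c := le_csSup hComp.bddAbove htT
      linarith
  -- conclude
  intro η hη θ hθ
  obtain ⟨hη0, hηπ⟩ := hη
  obtain ⟨hθ0, hθπ⟩ := hθ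
  have habs : v (η - θ) = v |η - θ| := by
    rcases abs_cases (η - θ) with ⟨h, _⟩ | ⟨h, _⟩
    · rw [h]
    · rw [h, heven]
  rw [habs]
  have habs1 : |η - θ| < π := by
    rcases abs_cases (η - θ) with ⟨h, _⟩ | ⟨h, _⟩ <;> rw [h] <;> linarith
  have habs0 : 0 ≤ |η - θ| := abs_nonneg _
  rcases le_or_gt (η + θ) π with hle | hgt
  · exact mono _ _ habs0 (by rcases abs_cases (η - θ) with ⟨h, _⟩ | ⟨h, _⟩ <;>
      rw [h] <;> linarith) hle
  · have hper' : v (η + θ) = v (2 * π - η - θ) := by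
      have := hper (η + θ - 2 * π)
      have e : η + θ - 2 * π + 2 * π = η + θ := by ring
      rw [e] at this
      rw [this]
      have e2 : η + θ - 2 * π = -(2 * π - η - θ) := by ring
      rw [e2, heven]
    rw [hper']
    refine mono _ _ habs0 ?_ (by linarith)
    rcases abs_cases (η - θ) with ⟨h, _⟩ | ⟨h, _⟩ <;> rw [h] <;> linarith
end

section
/- Let v : ℝ → ℝ be continuous, even, and 2π-periodic. Suppose there exists ε > 0 such that v(η + θ) > v(η - θ) for all η ∈ (0, ε) and all θ ∈ (0, π). Then v is strictly increasing on (0, π), and moreover v(η + θ) > v(η - θ) for all η, θ ∈ (0, π). -/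
open Real Set

theorem asymptotic_symmetry_stmt_2 (v : ℝ → ℝ) (hv : Continuous v)
    (heven : ∀ θ : ℝ, v (-θ) = v θ)
    (hper : ∀ θ : ℝ, v (θ + 2 * π) = v θ)
    (ε : ℝ) (hε : 0 < ε)
    (hrefl : ∀ η θ : ℝ, 0 < η → η < ε → 0 < θ → θ < π → v (η - θ) < v (η + θ)) :
    StrictMonoOn v (Ioo 0 π) ∧
      ∀ η ∈ Ioo (0:ℝ) π, ∀ θ ∈ Ioo (0:ℝ) π, v (η - θ) < v (η + θ) := by
  have step : ∀ a s : ℝ, 0 ≤ a → 0 < s → s < 2*ε → a + s ≤ π → v a < v (a + s) := by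
    intro a s ha hs hsε hsπ
    have h := hrefl (s/2) (a + s/2) (by linarith) (by linarith) (by linarith) (by linarith)
    have e1 : s/2 - (a + s/2) = -a := by ring
    have e2 : s/2 + (a + s/2) = a + s := by ring
    rw [e1, e2, heven] at h
    exact h
  have key : ∀ n : ℕ, ∀ a b : ℝ, 0 ≤ a → a < b → b ≤ π → b - a ≤ n * ε → v a < v b := by
    intro n
    induction n with
    | zero => intro a b ha hab hbπ hle; simp at hle; linarith
    | succ n ih =>
      intro a b ha hab hbπ hle
      by_cases h : b - a ≤ ε
      · have := step a (b - a) ha (by linarith) (by linarith) (by linarith)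
        simpa using this
      · push_neg at h
        have h1 : v a < v (a + ε) := step a ε ha hε (by linarith) (by linarith)
        have h2 : v (a + ε) < v b := ih (a + ε) b (by linarith) (by linarith) hbπ
          (by push_cast at hle ⊢; linarith)
        linarith
  have mono : ∀ a b : ℝ, 0 ≤ a → a < b → b ≤ π → v a < v b := by
    intro a b ha hab hbπ
    obtain ⟨n, hn⟩ := Archimedean.arch (b - a) hε
    refine key n a b ha hab hbπ ?_
    simpa [nsmul_eq_mul] using hn
  constructor
  · intro a ha b hb hab
    exact mono a b ha.1.le hab hb.2.le
  · intro η hη θ hθ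
    have hπ := pi_pos
    by_cases hc : η + θ ≤ π
    · rcases le_or_gt θ η with h | h
      · exact mono (η - θ) (η + θ) (by linarith [hθ.1]) (by linarith [hθ.1]) hc
      · have e : v (η - θ) = v (θ - η) := by
          rw [show η - θ = -(θ - η) by ring, heven]
        rw [e]
        exact mono (θ - η) (η + θ) (by linarith) (by linarith [hη.1]) hc
    · push_neg at hc
      have hval : v (η + θ) = v (2*π - (η + θ)) := by
        rw [show (2*π - (η + θ)) = -(η + θ - 2*π) by ring, heven,
          show η + θ - 2*π = (η + θ - 2*π) by ring, ← hper (η + θ - 2*π)]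
        ring_nf
      rw [hval]
      rcases le_or_gt θ η with h | h
      · exact mono (η - θ) (2*π - (η+θ)) (by linarith [hθ.1]) (by linarith [hη.2]) (by linarith [hη.1, hθ.1])
      · have e : v (η - θ) = v (θ - η) := by
          rw [show η - θ = -(θ - η) by ring, heven]
        rw [e]
        exact mono (θ - η) (2*π - (η+θ)) (by linarith) (by linarith [hθ.2]) (by linarith [hη.1, hθ.1])
end

section
/- Let v : ℝ → ℝ be continuous, even, and 2π-periodic, and let R = {η ∈ ℝ : v(2η - φ) = v(φ) for all φ ∈ ℝ} be its set of points of reflectional symmetry. If for some η ∈ ℝ one has v(η + φ) ≥ v(η - φ) for all φ ∈ [0, π] and v(η + φ₀) > v(η - φ₀) for some φ₀ ∈ (0, π), then R = {nπ : n ∈ ℤ}. -/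
open Real Set

theorem asymptotic_symmetry_stmt_3 (v : ℝ → ℝ) (hv : Continuous v)
    (heven : ∀ θ : ℝ, v (-θ) = v θ)
    (hper : ∀ θ : ℝ, v (θ + 2 * π) = v θ)
    (η₀ : ℝ)
    (hge : ∀ φ ∈ Icc (0:ℝ) π, v (η₀ - φ) ≤ v (η₀ + φ))
    (φ₀ : ℝ) (hφ₀ : φ₀ ∈ Ioo (0:ℝ) π)
    (hstrict : v (η₀ - φ₀) < v (η₀ + φ₀)) :
    {η : ℝ | ∀ φ : ℝ, v (2 * η - φ) = v φ} = {x : ℝ | ∃ n : ℤ, x = n * π} := by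
  have hP : Function.Periodic v (2 * π) := hper
  have hPint : ∀ (n : ℤ) (θ : ℝ), v (θ + n * (2 * π)) = v θ := fun n θ =>
    ((hP.int_mul n) θ)
  ext η
  simp only [Set.mem_setOf_eq]
  constructor
  · intro hsym
    by_contra hno
    push_neg at hno
    -- 2η is a period
    have hT : ∀ θ : ℝ, v (θ + 2 * η) = v θ := by
      intro θ
      have h1 := hsym (-θ)
      have : 2 * η - -θ = θ + 2 * η := by ring
      rw [this] at h1
      rw [h1, heven]
    set n : ℤ := round (η / π) with hn
    set β : ℝ := η - n * π with hβdef
    have hπ : (0:ℝ) < π := Real.pi_pos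
    have hβabs : |β| ≤ π / 2 := by
      have h := abs_sub_round (η / π)
      have : |η / π - n| * π ≤ (1 / 2) * π := by
        exact mul_le_mul_of_nonneg_right h (le_of_lt hπ)
      have hid : β = (η / π - n) * π := by
        rw [hβdef]; field_simp
      calc |β| = |η / π - n| * π := by
            rw [hid, abs_mul, abs_of_pos hπ]
        _ ≤ (1 / 2) * π := this
        _ = π / 2 := by ring
    have hβne : β ≠ 0 := by
      intro h
      exact hno n (by linarith [sub_eq_zero.mp h])
    -- 2β is a period
    have hTβ : ∀ θ : ℝ, v (θ + 2 * β) = v θ := by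
      intro θ
      have : θ + 2 * β = (θ + 2 * η) + (-n : ℤ) * (2 * π) := by
        push_cast; ring
      rw [this, hPint, hT]
    set a : ℝ := 2 * |β| with hadef
    have ha : 0 < a := by positivity
    have haπ : a ≤ π := by
      rw [hadef]; linarith [hβabs]
    have hTa : ∀ θ : ℝ, v (θ + a) = v θ := by
      intro θ
      rcases abs_cases β with ⟨h1, _⟩ | ⟨h1, _⟩
      · rw [hadef, h1]; exact hTβ θ
      · rw [hadef, h1]
        have := hTβ (θ + 2 * -β)
        have h2 : θ + 2 * -β + 2 * β = θ := by ring
        rw [h2] at this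
        exact this.symm
    have hQ : Function.Periodic v a := hTa
    have hQint : ∀ (m : ℤ) (θ : ℝ), v (θ + m * a) = v θ := fun m θ =>
      ((hQ.int_mul m) θ)
    -- g φ = v(η₀+φ) - v(η₀-φ) is ≥ 0 everywhere
    have hnonneg : ∀ φ : ℝ, v (η₀ - φ) ≤ v (η₀ + φ) := by
      intro φ
      set m : ℤ := ⌊φ / a⌋ with hm
      set r : ℝ := φ - m * a with hr
      have hr0 : 0 ≤ r := Int.sub_floor_div_mul_nonneg φ ha
      have hr1 : r < a := Int.sub_floor_div_mul_lt φ ha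
      have h1 : v (η₀ + φ) = v (η₀ + r) := by
        have : η₀ + φ = (η₀ + r) + m * a := by rw [hr]; ring
        rw [this, hQint]
      have h2 : v (η₀ - φ) = v (η₀ - r) := by
        have : η₀ - φ = (η₀ - r) + (-m : ℤ) * a := by rw [hr]; push_cast; ring
        rw [this, hQint]
      rw [h1, h2]
      exact hge r ⟨hr0, le_trans (le_of_lt hr1) haπ⟩
    have h3 := hnonneg (-φ₀)
    have h4 : η₀ - -φ₀ = η₀ + φ₀ := by ring
    have h5 : η₀ + -φ₀ = η₀ - φ₀ := by ring
    rw [h4, h5] at h3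
    linarith
  · rintro ⟨n, rfl⟩ φ
    have : 2 * (n * π) - φ = -φ + n * (2 * π) := by ring
    rw [this, hPint, heven]
end

section
/- Let v : ℝ → ℝ be continuous, even, and 2π-periodic. Suppose there exists ε ∈ (0, π) such that v(η + θ) ≥ v(η - θ) for all η ∈ (-ε, ε) and all θ ∈ (0, π). Then v is constant. -/
open Real Set

theorem asymptotic_symmetry_stmt_4 (v : ℝ → ℝ) (hv : Continuous v)
    (heven : ∀ θ : ℝ, v (-θ) = v θ)
    (hper : ∀ θ : ℝ, v (θ + 2 * π) = v θ)
    (ε : ℝ) (hε : 0 < ε) (hεπ : ε < π)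
    (hrefl : ∀ η θ : ℝ, -ε < η → η < ε → 0 < θ → θ < π → v (η - θ) ≤ v (η + θ)) :
    ∀ x y : ℝ, v x = v y := by
  have hP : Function.Periodic v (2 * π) := hper
  have hshift : ∀ (x : ℝ) (k : ℤ), v (x + k * (2 * π)) = v x := fun x k =>
    (hP.int_mul k) x
  -- symmetry about η for θ in (0, π), both directions
  have eq1 : ∀ η θ : ℝ, -ε < η → η < ε → 0 < θ → θ < π → v (η - θ) = v (η + θ) := by
    intro η θ h1 h2 h3 h4
    refine le_antisymm (hrefl η θ h1 h2 h3 h4) ?_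
    have := hrefl (-η) θ (by linarith) (by linarith) h3 h4
    have e1 : v (-η - θ) = v (η + θ) := by
      rw [show -η - θ = -(η + θ) by ring, heven]
    have e2 : v (-η + θ) = v (η - θ) := by
      rw [show -η + θ = -(η - θ) by ring, heven]
    linarith
  -- symmetry about η for all θ
  have key : ∀ η θ : ℝ, -ε < η → η < ε → v (η - θ) = v (η + θ) := by
    intro η θ h1 h2
    set k : ℤ := ⌊(θ + π) / (2 * π)⌋ with hk
    set θ' : ℝ := θ - k * (2 * π) with hθ'
    have h2π : (0:ℝ) < 2 * π := by positivity
    have hb1 : -π ≤ θ' := by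
      have h3 : (k : ℝ) * (2 * π) ≤ θ + π :=
        (le_div_iff₀ h2π).mp (Int.floor_le ((θ + π) / (2 * π)))
      simp only [hθ']; linarith
    have hb2 : θ' < π := by
      have h3 : θ + π < ((k : ℝ) + 1) * (2 * π) := by
        have := (div_lt_iff₀ h2π).mp (Int.lt_floor_add_one ((θ + π) / (2 * π)))
        push_cast at this ⊢; linarith
      simp only [hθ']; linarith
    have hvp : v (η + θ) = v (η + θ') := by
      rw [show η + θ = (η + θ') + k * (2 * π) by simp [hθ']; ring, hshift]
    have hvm : v (η - θ) = v (η - θ') := by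
      rw [show η - θ' = (η - θ) + k * (2 * π) by simp [hθ']; ring, hshift]
    rw [hvp, hvm]
    rcases lt_trichotomy θ' 0 with h | h | h
    · rcases eq_or_lt_of_le hb1 with h' | h'
      · rw [show η - θ' = η + π by rw [← h']; ring,
          show η + θ' = η - π by rw [← h']; ring]
        rw [show η + π = (η - π) + (1:ℤ) * (2 * π) by push_cast; ring, hshift]
      · have h5 := eq1 η (-θ') h1 h2 (by linarith) (by linarith)
        rw [show η - -θ' = η + θ' by ring, show η + -θ' = η - θ' by ring] at h5
        exact h5.symm
    · rw [h]; ring_nf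
    · exact eq1 η θ' h1 h2 h hb2
  -- small periods
  have hper' : ∀ η : ℝ, 0 < η → η < ε → Function.Periodic v (2 * η) := by
    intro η h1 h2 x
    have := key η (x + η) (by linarith) h2
    rw [show η - (x + η) = -x by ring, show η + (x + η) = x + 2 * η by ring,
      heven] at this
    exact this.symm
  intro x y
  apply eq_of_forall_dist_le
  intro e he
  obtain ⟨δ, hδ, hδc⟩ := Metric.continuous_iff.mp hv x e he
  set η : ℝ := min δ ε / 2 with hη
  have hη0 : 0 < η := by positivity
  have hηε : η < ε := by
    have : min δ ε ≤ ε := min_le_right _ _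
    simp only [hη]; linarith
  have hp : Function.Periodic v (2 * η) := hper' η hη0 hηε
  set t : ℝ := (y - x) / (2 * η) with ht
  set r : ℝ := (2 * η) * Int.fract t with hr
  have hyx : y = (x + r) + ⌊t⌋ * (2 * η) := by
    have : y - x = (2 * η) * t := by rw [ht]; field_simp
    have hf : Int.fract t = t - ⌊t⌋ := Int.self_sub_floor t ▸ rfl
    rw [hr, hf]; push_cast; linarith [this]
  have hvy : v y = v (x + r) := by rw [hyx, (hp.int_mul ⌊t⌋) (x + r)]
  rw [hvy]
  have hr0 : 0 ≤ r := by
    have := Int.fract_nonneg t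
    positivity
  have hrlt : r < δ := by
    have h1 : Int.fract t < 1 := Int.fract_lt_one t
    have h2 : 2 * η ≤ δ := by
      have : min δ ε ≤ δ := min_le_left _ _
      simp only [hη]; linarith
    calc r < 2 * η * 1 := by
            rw [hr]; exact (mul_lt_mul_iff_right₀ (by positivity)).mpr h1
      _ ≤ δ := by linarith
  have := hδc (x + r) (by rw [Real.dist_eq]; rw [show x + r - x = r by ring, abs_of_nonneg hr0]; exact hrlt)
  rw [dist_comm]; exact this.le
end

section
/- Let U ⊆ Sⁿ⁻¹ (the unit sphere in ℝ^N, N ≥ 2) be an open set, Σ ⊆ ℝ^N a rotation-invariant (radial) domain, and z : Σ → ℝ continuous. For e ∈ Sⁿ⁻¹, write σ_e(x) = x - 2(x·e)e for the reflection across the hyperplane {x : x·e = 0} and Σ(e) = {x ∈ Σ : x·e > 0}. If z(x) ≥ z(σ_e(x)) for all x ∈ Σ(e) and all e ∈ U, and z = z ∘ σ_p for some p ∈ U, then z is radially symmetric, i.e., z(x) depends only on |x|. -/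
open Real Set


lemma inner_combo {N : ℕ} {p q : EuclideanSpace ℝ (Fin N)}
    (hp : ‖p‖ = 1) (hq : ‖q‖ = 1) (hpq : (inner ℝ p q : ℝ) = 0)
    (a b c d : ℝ) :
    (inner ℝ (a • p + b • q) (c • p + d • q) : ℝ) = a * c + b * d := by
  have h1 : (inner ℝ p p : ℝ) = 1 := by
    rw [real_inner_self_eq_norm_sq, hp]; norm_num
  have h2 : (inner ℝ q q : ℝ) = 1 := by
    rw [real_inner_self_eq_norm_sq, hq]; norm_num
  have h3 : (inner ℝ q p : ℝ) = 0 := by rw [real_inner_comm]; exact hpq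
  rw [inner_add_left, inner_add_right, inner_add_right,
    real_inner_smul_left, real_inner_smul_left, real_inner_smul_left, real_inner_smul_left,
    real_inner_smul_right, real_inner_smul_right, real_inner_smul_right, real_inner_smul_right,
    h1, h2, h3, hpq]
  ring

lemma norm_combo {N : ℕ} {p q : EuclideanSpace ℝ (Fin N)}
    (hp : ‖p‖ = 1) (hq : ‖q‖ = 1) (hpq : (inner ℝ p q : ℝ) = 0)
    {r : ℝ} (hr : 0 ≤ r) (t : ℝ) :
    ‖(r * Real.cos t) • p + (r * Real.sin t) • q‖ = r := by
  rw [norm_eq_sqrt_real_inner, inner_combo hp hq hpq]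
  rw [show r * Real.cos t * (r * Real.cos t) + r * Real.sin t * (r * Real.sin t)
      = r^2 * (Real.sin t ^ 2 + Real.cos t ^ 2) by ring, Real.sin_sq_add_cos_sq]
  rw [mul_one, Real.sqrt_sq hr]

lemma cos_ne_zero_shift {a : ℝ} (h : Real.cos a = 0) {b : ℝ} (hb : b ≠ 0)
    (hb2 : |b| < 1) : Real.cos (a + b) ≠ 0 := by
  intro h2
  obtain ⟨k, hk⟩ := Real.cos_eq_zero_iff.mp h
  obtain ⟨k', hk'⟩ := Real.cos_eq_zero_iff.mp h2
  have hdiff : b = ((k':ℝ) - k) * π := by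
    have hh : a + b - a = (2*(k':ℝ)+1)*π/2 - (2*(k:ℝ)+1)*π/2 := by rw [← hk, ← hk']
    linear_combination hh
  have hk0 : k' ≠ k := by
    intro hkk
    rw [hkk, sub_self, zero_mul] at hdiff
    exact hb hdiff
  have h1 : (1:ℤ) ≤ |k' - k| := Int.one_le_abs (sub_ne_zero.mpr hk0)
  have h1' : (1:ℝ) ≤ |(k':ℝ) - k| := by
    have h2' : ((1:ℤ):ℝ) ≤ ((|k' - k| : ℤ) : ℝ) := Int.cast_le.mpr h1
    rw [Int.cast_abs] at h2'
    push_cast at h2'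
    simpa using h2'
  have h3 : (3:ℝ) ≤ |b| := by
    rw [hdiff, abs_mul, abs_of_pos Real.pi_pos]
    nlinarith [Real.pi_gt_three]
  linarith

lemma circle_key {N : ℕ}
    (S : Set (EuclideanSpace ℝ (Fin N)))
    (U : Set (EuclideanSpace ℝ (Fin N)))
    (z : EuclideanSpace ℝ (Fin N) → ℝ) (hz : ContinuousOn z S)
    (hineq : ∀ e ∈ U, ∀ x ∈ S, 0 < (inner ℝ x e : ℝ) →
      z (x - (2 * (inner ℝ x e : ℝ)) • e) ≤ z x)
    (p : EuclideanSpace ℝ (Fin N)) (hp1 : ‖p‖ = 1)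
    (hsym : ∀ x ∈ S, z (x - (2 * (inner ℝ x p : ℝ)) • p) = z x)
    (r : ℝ) (hr : 0 < r) (hsub : ∀ w : EuclideanSpace ℝ (Fin N), ‖w‖ = r → w ∈ S)
    (q : EuclideanSpace ℝ (Fin N)) (hq1 : ‖q‖ = 1) (hpq : (inner ℝ p q : ℝ) = 0)
    (ε : ℝ) (hε : 0 < ε) (hε2 : ε ≤ 1/2)
    (hU : ∀ θ : ℝ, |θ| < ε → (Real.cos θ) • p + (Real.sin θ) • q ∈ U)
    (m : ℝ) (t₀ t₁ : ℝ)
    (h0 : m ≤ z ((r * Real.cos t₀) • p + (r * Real.sin t₀) • q)) :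
    m ≤ z ((r * Real.cos t₁) • p + (r * Real.sin t₁) • q) := by
  set c : ℝ → EuclideanSpace ℝ (Fin N) :=
    fun t => (r * Real.cos t) • p + (r * Real.sin t) • q with hc
  set e : ℝ → EuclideanSpace ℝ (Fin N) :=
    fun θ => (Real.cos θ) • p + (Real.sin θ) • q with he
  have hnorm : ∀ t, ‖c t‖ = r := fun t => norm_combo hp1 hq1 hpq hr.le t
  have hcS : ∀ t, c t ∈ S := fun t => hsub _ (hnorm t)
  have hinner : ∀ t θ, (inner ℝ (c t) (e θ) : ℝ) = r * Real.cos (t - θ) := by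
    intro t θ
    rw [hc, he]
    show (inner ℝ ((r * Real.cos t) • p + (r * Real.sin t) • q)
        ((Real.cos θ) • p + (Real.sin θ) • q) : ℝ) = _
    rw [inner_combo hp1 hq1 hpq, Real.cos_sub]; ring
  have hrefl : ∀ t θ, c t - (2 * (inner ℝ (c t) (e θ) : ℝ)) • (e θ) = c (π - t + 2*θ) := by
    intro t θ
    rw [hinner]
    show (r * Real.cos t) • p + (r * Real.sin t) • q
        - (2*(r*Real.cos (t-θ))) • ((Real.cos θ) • p + (Real.sin θ) • q)
        = (r * Real.cos (π - t + 2*θ)) • p + (r * Real.sin (π - t + 2*θ)) • q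
    have e1 : r * Real.cos (π - t + 2*θ) = r * Real.cos t - 2*(r*Real.cos (t-θ)) * Real.cos θ := by
      rw [show π - t + 2*θ = π - (t - 2*θ) by ring, Real.cos_pi_sub,
        show t - 2*θ = (t-θ) - θ by ring, Real.cos_sub (t-θ) θ, Real.cos_sub, Real.sin_sub]
      linear_combination (r * Real.cos t) * Real.sin_sq_add_cos_sq θ
    have e2 : r * Real.sin (π - t + 2*θ) = r * Real.sin t - 2*(r*Real.cos (t-θ)) * Real.sin θ := by
      rw [show π - t + 2*θ = π - (t - 2*θ) by ring, Real.sin_pi_sub,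
        show t - 2*θ = (t-θ) - θ by ring, Real.sin_sub (t-θ) θ, Real.cos_sub, Real.sin_sub]
      linear_combination (r * Real.sin t) * Real.sin_sq_add_cos_sq θ
    rw [e1, e2]
    module
  have he0 : e 0 = p := by rw [he]; simp
  have hrefl0 : ∀ t, c t - (2 * (inner ℝ (c t) p : ℝ)) • p = c (π - t) := by
    intro t
    have h := hrefl t 0
    rw [he0] at h
    rw [h]
    norm_num
  have hsymc : ∀ t, z (c (π - t)) = z (c t) := by
    intro t
    rw [← hrefl0 t]
    exact hsym _ (hcS t)
  have moveA : ∀ t θ, |θ| < ε → 0 < Real.cos (t + θ) → m ≤ z (c t) → m ≤ z (c (t + 2*θ)) := by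
    intro t θ hθ hcos hm
    have hy : (0:ℝ) < (inner ℝ (c (t+2*θ)) (e θ) : ℝ) := by
      rw [hinner, show t + 2*θ - θ = t + θ by ring]
      exact mul_pos hr hcos
    have h1 := hineq (e θ) (hU θ hθ) (c (t+2*θ)) (hcS _) hy
    rw [hrefl (t+2*θ) θ, show π - (t+2*θ) + 2*θ = π - t by ring] at h1
    calc m ≤ z (c t) := hm
      _ = z (c (π - t)) := (hsymc t).symm
      _ ≤ z (c (t+2*θ)) := h1
  have moveB : ∀ t θ, |θ| < ε → Real.cos (t - θ) < 0 → m ≤ z (c t) → m ≤ z (c (t - 2*θ)) := by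
    intro t θ hθ hcos hm
    have hy : (0:ℝ) < (inner ℝ (c (π - t + 2*θ)) (e θ) : ℝ) := by
      rw [hinner, show π - t + 2*θ - θ = π - (t - θ) by ring, Real.cos_pi_sub]
      nlinarith
    have h1 := hineq (e θ) (hU θ hθ) (c (π - t + 2*θ)) (hcS _) hy
    rw [hrefl (π - t + 2*θ) θ, show π - (π - t + 2*θ) + 2*θ = t by ring] at h1
    have h2 : z (c (t - 2*θ)) = z (c (π - t + 2*θ)) := by
      rw [show t - 2*θ = π - (π - t + 2*θ) by ring]
      exact hsymc _
    rw [h2]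
    exact le_trans hm h1
  have move : ∀ t s, |s| < 2*ε → Real.cos (t + s/2) ≠ 0 → m ≤ z (c t) → m ≤ z (c (t + s)) := by
    intro t s hs hcos hm
    have hs2 : |s/2| < ε := by
      rw [abs_div, show |(2:ℝ)| = 2 by norm_num]; linarith
    rcases hcos.lt_or_gt with hneg | hpos
    · have h := moveB t (-(s/2)) (by rwa [abs_neg]) (by rw [show t - -(s/2) = t + s/2 by ring]; exact hneg) hm
      rwa [show t - 2*(-(s/2)) = t + s by ring] at h
    · have h := moveA t (s/2) hs2 hpos hm
      rwa [show t + 2*(s/2) = t + s by ring] at h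
  have move2 : ∀ t s, |s| < 2*ε → m ≤ z (c t) → m ≤ z (c (t + s)) := by
    intro t s hs hm
    by_cases hs0 : s = 0
    · subst hs0; simpa using hm
    by_cases h1 : Real.cos (t + s/2) = 0
    · have hA : Real.cos (t + (s/2)/2) ≠ 0 := by
        have h := cos_ne_zero_shift h1 (b := -(s/4)) (by simpa using (div_ne_zero hs0 (by norm_num : (4:ℝ) ≠ 0)))
          (by rw [abs_neg, abs_div, show |(4:ℝ)| = 4 by norm_num]; linarith)
        rwa [show t + s/2 + -(s/4) = t + (s/2)/2 by ring] at h
      have hB : Real.cos ((t + s/2) + (s/2)/2) ≠ 0 := by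
        have h := cos_ne_zero_shift h1 (b := s/4)
          (div_ne_zero hs0 (by norm_num : (4:ℝ) ≠ 0))
          (by rw [abs_div, show |(4:ℝ)| = 4 by norm_num]; linarith)
        rwa [show t + s/2 + s/4 = (t + s/2) + (s/2)/2 by ring] at h
      have hs2 : |s/2| < 2*ε := by
        rw [abs_div, show |(2:ℝ)| = 2 by norm_num]; linarith [abs_nonneg s]
      have step1 : m ≤ z (c (t + s/2)) := move t (s/2) hs2 hA hm
      have step2 : m ≤ z (c ((t + s/2) + s/2)) := move (t + s/2) (s/2) hs2 hB step1
      rwa [show t + s/2 + s/2 = t + s by ring] at step2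
    · exact move t s hs h1 hm
  have hcc : Continuous c := by
    rw [hc]; fun_prop
  have hT_closed : IsClosed {t : ℝ | m ≤ z (c t)} :=
    isClosed_le continuous_const (hz.comp_continuous hcc hcS)
  have hT_open : IsOpen {t : ℝ | m ≤ z (c t)} := by
    rw [Metric.isOpen_iff]
    intro t ht
    refine ⟨2*ε, by linarith, fun t' ht' => ?_⟩
    rw [Metric.mem_ball, Real.dist_eq] at ht'
    have := move2 t (t' - t) ht' ht
    simpa using this
  have hT : {t : ℝ | m ≤ z (c t)} = univ :=
    IsClopen.eq_univ ⟨hT_closed, hT_open⟩ ⟨t₀, h0⟩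
  exact (eq_univ_iff_forall.mp hT t₁)


lemma mem_of_norm_eq {N : ℕ} {S : Set (EuclideanSpace ℝ (Fin N))}
    (hSrad : ∀ f : EuclideanSpace ℝ (Fin N) ≃ₗᵢ[ℝ] EuclideanSpace ℝ (Fin N), f '' S = S)
    {x w : EuclideanSpace ℝ (Fin N)} (hx : x ∈ S) (h : ‖w‖ = ‖x‖) : w ∈ S := by
  have h' : ‖x‖ = ‖w‖ := h.symm
  have hrefl := Submodule.reflection_sub h'
  rw [← hSrad (Submodule.reflection (ℝ ∙ (x - w))ᗮ)]
  exact ⟨x, hx, hrefl⟩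

lemma exists_orth {N : ℕ} (hN : 2 ≤ N) (p : EuclideanSpace ℝ (Fin N)) (hp1 : ‖p‖ = 1) :
    ∃ q : EuclideanSpace ℝ (Fin N), ‖q‖ = 1 ∧ (inner ℝ p q : ℝ) = 0 := by
  have hpp : (inner ℝ p p : ℝ) = 1 := by
    rw [real_inner_self_eq_norm_sq, hp1]; norm_num
  set i0 : Fin N := ⟨0, by omega⟩
  set i1 : Fin N := ⟨1, by omega⟩
  set v0 : EuclideanSpace ℝ (Fin N) := EuclideanSpace.single i0 (1:ℝ)
  set v1 : EuclideanSpace ℝ (Fin N) := EuclideanSpace.single i1 (1:ℝ)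
  set w0 : EuclideanSpace ℝ (Fin N) := v0 - (inner ℝ p v0 : ℝ) • p
  set w1 : EuclideanSpace ℝ (Fin N) := v1 - (inner ℝ p v1 : ℝ) • p
  have horth : ∀ v : EuclideanSpace ℝ (Fin N), (inner ℝ p (v - (inner ℝ p v : ℝ) • p) : ℝ) = 0 := by
    intro v
    rw [inner_sub_right, real_inner_smul_right, hpp]
    ring
  have key : w0 ≠ 0 ∨ w1 ≠ 0 := by
    by_contra hcon
    push_neg at hcon
    obtain ⟨h0, h1⟩ := hcon
    have e0 : v0 = (inner ℝ p v0 : ℝ) • p := by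
      have := sub_eq_zero.mp h0; exact this
    have e1 : v1 = (inner ℝ p v1 : ℝ) • p := by
      have := sub_eq_zero.mp h1; exact this
    -- evaluate coordinates
    have hne : i1 ≠ i0 := by
      intro h
      have := congrArg Fin.val h
      simp [i0, i1] at this
    have hv0 : v0 i0 = 1 := by simp [v0]
    have hne' : ¬ i0 = i1 := fun h => hne h.symm
    have hv1 : v1 i0 = 0 := by
      simp [v1, EuclideanSpace.single_apply, hne']
    have hv1' : v1 i1 = 1 := by simp [v1]
    have ha : (1:ℝ) = (inner ℝ p v0 : ℝ) * p i0 := by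
      rw [← hv0]
      conv_lhs => rw [e0]
      simp
    have hb : (0:ℝ) = (inner ℝ p v1 : ℝ) * p i0 := by
      rw [← hv1]
      conv_lhs => rw [e1]
      simp
    have hc : (1:ℝ) = (inner ℝ p v1 : ℝ) * p i1 := by
      rw [← hv1']
      conv_lhs => rw [e1]
      simp
    have hnz : (inner ℝ p v1 : ℝ) ≠ 0 := by
      intro h; rw [h] at hc; simp at hc
    have hpz : p i0 = 0 := by
      rcases mul_eq_zero.mp hb.symm with h | h
      · exact absurd h hnz
      · exact h
    rw [hpz, mul_zero] at ha
    exact one_ne_zero ha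
  rcases key with hw | hw
  · refine ⟨‖w0‖⁻¹ • w0, ?_, ?_⟩
    · rw [norm_smul, norm_inv, norm_norm, inv_mul_cancel₀ (norm_ne_zero_iff.mpr hw)]
    · rw [real_inner_smul_right, horth v0]; ring
  · refine ⟨‖w1‖⁻¹ • w1, ?_, ?_⟩
    · rw [norm_smul, norm_inv, norm_norm, inv_mul_cancel₀ (norm_ne_zero_iff.mpr hw)]
    · rw [real_inner_smul_right, horth v1]; ring

lemma exists_angle {N : ℕ} (hN : 2 ≤ N) (p x : EuclideanSpace ℝ (Fin N))
    (hp1 : ‖p‖ = 1) (hx0 : 0 < ‖x‖) :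
    ∃ q t, ‖q‖ = 1 ∧ (inner ℝ p q : ℝ) = 0 ∧
      x = (‖x‖ * Real.cos t) • p + (‖x‖ * Real.sin t) • q := by
  have hpp : (inner ℝ p p : ℝ) = 1 := by
    rw [real_inner_self_eq_norm_sq, hp1]; norm_num
  set r := ‖x‖ with hrdef
  set a : ℝ := (inner ℝ p x : ℝ) with ha
  set x' : EuclideanSpace ℝ (Fin N) := x - a • p with hx'
  have hx'orth : (inner ℝ p x' : ℝ) = 0 := by
    rw [hx', inner_sub_right, real_inner_smul_right, hpp]; ring
  by_cases hz : x' = 0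
  · -- x = a • p with |a| = r
    have hxa : x = a • p := by
      have := sub_eq_zero.mp hz; exact this
    obtain ⟨q, hq1, hpq⟩ := exists_orth hN p hp1
    have hna : |a| = r := by
      rw [hrdef, hxa, norm_smul, hp1, mul_one, Real.norm_eq_abs]
    rcases abs_cases a with ⟨h1, _⟩ | ⟨h1, _⟩
    · refine ⟨q, 0, hq1, hpq, ?_⟩
      rw [Real.cos_zero, Real.sin_zero, mul_one, mul_zero, zero_smul, add_zero, hxa]
      rw [← hna, h1]
    · refine ⟨q, π, hq1, hpq, ?_⟩
      rw [Real.cos_pi, Real.sin_pi, mul_zero, zero_smul, add_zero, hxa]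
      rw [show r * (-1) = -r by ring, ← hna, h1]
      simp
  · set b : ℝ := ‖x'‖ with hb
    have hbpos : 0 < b := norm_pos_iff.mpr hz
    set q : EuclideanSpace ℝ (Fin N) := b⁻¹ • x' with hq
    have hq1 : ‖q‖ = 1 := by
      rw [hq, norm_smul, norm_inv, Real.norm_eq_abs, abs_of_pos hbpos, ← hb,
        inv_mul_cancel₀ hbpos.ne']
    have hpq : (inner ℝ p q : ℝ) = 0 := by
      rw [hq, real_inner_smul_right, hx'orth]; ring
    have hxdec : x = a • p + b • q := by
      rw [hq, smul_smul, mul_inv_cancel₀ hbpos.ne', one_smul, hx']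
      abel
    have hsum : a^2 + b^2 = r^2 := by
      have h1 : (inner ℝ x x : ℝ) = r^2 := by
        rw [real_inner_self_eq_norm_sq, hrdef]
      rw [hxdec] at h1
      rw [inner_combo hp1 hq1 hpq] at h1
      nlinarith [h1]
    have hrpos : 0 < r := hx0
    have har : -1 ≤ a / r ∧ a / r ≤ 1 := by
      constructor
      · rw [neg_le, ← neg_div, div_le_one hrpos]
        nlinarith
      · rw [div_le_one hrpos]
        nlinarith
    refine ⟨q, Real.arccos (a / r), hq1, hpq, ?_⟩
    rw [Real.cos_arccos har.1 har.2, Real.sin_arccos]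
    have hsq : 1 - (a/r)^2 = (b/r)^2 := by
      field_simp
      nlinarith [hsum]
    rw [hsq, Real.sqrt_sq (div_nonneg hbpos.le hrpos.le)]
    rw [mul_div_cancel₀ _ hrpos.ne', mul_div_cancel₀ _ hrpos.ne']
    exact hxdec

lemma le_aux {N : ℕ} (hN : 2 ≤ N)
    (S : Set (EuclideanSpace ℝ (Fin N)))
    (hSrad : ∀ f : EuclideanSpace ℝ (Fin N) ≃ₗᵢ[ℝ] EuclideanSpace ℝ (Fin N), f '' S = S)
    (U : Set (EuclideanSpace ℝ (Fin N)))
    (hUsphere : U ⊆ Metric.sphere 0 1)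
    (hUopen : ∃ V : Set (EuclideanSpace ℝ (Fin N)), IsOpen V ∧ U = V ∩ Metric.sphere 0 1)
    (z : EuclideanSpace ℝ (Fin N) → ℝ) (hz : ContinuousOn z S)
    (hineq : ∀ e ∈ U, ∀ x ∈ S, 0 < (inner ℝ x e : ℝ) →
      z (x - (2 * (inner ℝ x e : ℝ)) • e) ≤ z x)
    (p : EuclideanSpace ℝ (Fin N)) (hp : p ∈ U)
    (hsym : ∀ x ∈ S, z (x - (2 * (inner ℝ x p : ℝ)) • p) = z x)
    (x : EuclideanSpace ℝ (Fin N)) (hx : x ∈ S)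
    (y : EuclideanSpace ℝ (Fin N)) (hy : y ∈ S)
    (hxy : ‖x‖ = ‖y‖) (hx0 : 0 < ‖x‖) : z x ≤ z y := by
  set r := ‖x‖ with hrdef
  have hp1 : ‖p‖ = 1 := by
    have := hUsphere hp
    rwa [mem_sphere_zero_iff_norm] at this
  have hsub : ∀ w : EuclideanSpace ℝ (Fin N), ‖w‖ = r → w ∈ S := fun w hw =>
    mem_of_norm_eq hSrad hx hw
  obtain ⟨V, hVopen, hUV⟩ := hUopen
  have hpV : p ∈ V := by
    have := hp; rw [hUV] at this; exact this.1
  obtain ⟨ε₀, hε₀, hball⟩ := Metric.isOpen_iff.mp hVopen p hpV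
  set ε := min ε₀ 1 / 2 with hεdef
  have hε : 0 < ε := by
    have := lt_min hε₀ one_pos
    rw [hεdef]; linarith
  have hε2 : ε ≤ 1/2 := by
    have := min_le_right ε₀ 1
    rw [hεdef]; linarith
  have hεε₀ : ε < ε₀ := by
    have := min_le_left ε₀ 1
    rw [hεdef]; linarith
  have hUgen : ∀ q : EuclideanSpace ℝ (Fin N), ‖q‖ = 1 → (inner ℝ p q : ℝ) = 0 →
      ∀ θ : ℝ, |θ| < ε → (Real.cos θ) • p + (Real.sin θ) • q ∈ U := by
    intro q hq1 hpq θ hθ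
    have habs : 0 ≤ |θ| := abs_nonneg θ
    rw [hUV]
    constructor
    · apply hball
      rw [Metric.mem_ball, dist_eq_norm]
      have hdec : (Real.cos θ) • p + (Real.sin θ) • q - p
          = (Real.cos θ - 1) • p + (Real.sin θ) • q := by module
      rw [hdec]
      have hn : ‖(Real.cos θ - 1) • p + (Real.sin θ) • q‖
          = Real.sqrt ((Real.cos θ - 1) * (Real.cos θ - 1) + Real.sin θ * Real.sin θ) := by
        rw [norm_eq_sqrt_real_inner, inner_combo hp1 hq1 hpq]
      have hcosge : 1 - θ^2/2 ≤ Real.cos θ := Real.one_sub_sq_div_two_le_cos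
      have hle : (Real.cos θ - 1) * (Real.cos θ - 1) + Real.sin θ * Real.sin θ ≤ θ^2 := by
        nlinarith [Real.sin_sq_add_cos_sq θ, Real.cos_le_one θ]
      have : ‖(Real.cos θ - 1) • p + (Real.sin θ) • q‖ ≤ |θ| := by
        rw [hn]
        calc Real.sqrt ((Real.cos θ - 1) * (Real.cos θ - 1) + Real.sin θ * Real.sin θ)
            ≤ Real.sqrt (θ^2) := Real.sqrt_le_sqrt hle
          _ = |θ| := Real.sqrt_sq_eq_abs θ
      linarith
    · rw [mem_sphere_zero_iff_norm]
      have := norm_combo hp1 hq1 hpq (zero_le_one) θ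
      simpa using this
  obtain ⟨q, t₀, hq1, hpq, hxeq⟩ := exists_angle hN p x hp1 hx0
  have stage1 : z x ≤ z ((r * Real.cos 0) • p + (r * Real.sin 0) • q) := by
    apply circle_key S U z hz hineq p hp1 hsym r hx0 hsub q hq1 hpq ε hε hε2
      (hUgen q hq1 hpq) (z x) t₀ 0
    rw [← hxeq]
  have hzp : z x ≤ z (r • p) := by
    rw [Real.cos_zero, Real.sin_zero, mul_one, mul_zero, zero_smul, add_zero] at stage1
    exact stage1
  have hy0 : 0 < ‖y‖ := by rw [← hxy]; exact hx0
  obtain ⟨q', t₁, hq1', hpq', hyeq⟩ := exists_angle hN p y hp1 hy0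
  rw [← hxy] at hyeq
  have stage2 : z x ≤ z ((r * Real.cos t₁) • p + (r * Real.sin t₁) • q') := by
    apply circle_key S U z hz hineq p hp1 hsym r hx0 hsub q' hq1' hpq' ε hε hε2
      (hUgen q' hq1' hpq') (z x) 0 t₁
    rw [Real.cos_zero, Real.sin_zero, mul_one, mul_zero, zero_smul, add_zero]
    exact hzp
  rwa [← hyeq] at stage2

theorem asymptotic_symmetry_stmt_5 {N : ℕ} (hN : 2 ≤ N)
    (S : Set (EuclideanSpace ℝ (Fin N))) (hSopen : IsOpen S)
    (hSrad : ∀ f : EuclideanSpace ℝ (Fin N) ≃ₗᵢ[ℝ] EuclideanSpace ℝ (Fin N), f '' S = S)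
    (U : Set (EuclideanSpace ℝ (Fin N)))
    (hUsphere : U ⊆ Metric.sphere 0 1)
    (hUopen : ∃ V : Set (EuclideanSpace ℝ (Fin N)), IsOpen V ∧ U = V ∩ Metric.sphere 0 1)
    (z : EuclideanSpace ℝ (Fin N) → ℝ) (hz : ContinuousOn z S)
    (hineq : ∀ e ∈ U, ∀ x ∈ S, 0 < (inner ℝ x e : ℝ) →
      z (x - (2 * (inner ℝ x e : ℝ)) • e) ≤ z x)
    (p : EuclideanSpace ℝ (Fin N)) (hp : p ∈ U)
    (hsym : ∀ x ∈ S, z (x - (2 * (inner ℝ x p : ℝ)) • p) = z x) :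
    ∀ x ∈ S, ∀ y ∈ S, ‖x‖ = ‖y‖ → z x = z y := by
  intro x hx y hy hxy
  rcases eq_or_lt_of_le (norm_nonneg x) with h0 | h0
  · have hx0 : x = 0 := by rw [← norm_eq_zero, ← h0]
    have hy0 : y = 0 := by rw [← norm_eq_zero, ← hxy, ← h0]
    rw [hx0, hy0]
  · have hy0 : 0 < ‖y‖ := by rw [← hxy]; exact h0
    exact le_antisymm
      (le_aux hN S hSrad U hUsphere hUopen z hz hineq p hp hsym x hx y hy hxy h0)
      (le_aux hN S hSrad U hUsphere hUopen z hz hineq p hp hsym y hy x hx hxy.symm hy0)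
end

section
/- Let Σ ⊆ ℝ^N (N ≥ 2) be a rotation-invariant domain and z : Σ → ℝ continuous. For η ∈ ℝ let e(η) = (cos η, sin η, 0, …, 0) ∈ Sⁿ⁻¹, and for a unit vector e define z_e(x) = z(Γ_e x) - z(σ_e Γ_e x) on Σ₁ = {x ∈ Σ : x₁ > 0}, where Γ_e is a rotation mapping e₁ to e and σ_e is the reflection fixing the hyperplane with normal e. Suppose z_{e(0)} ≡ 0 on Σ₁ and that for some ε ∈ (0, π), z_{e(η)} > 0 on Σ₁ for all η ∈ (0, ε). Then z_{e(η)} > 0 on Σ₁ for all η ∈ (0, π) and z_{e(η)} < 0 on Σ₁ for all η ∈ (-π, 0). -/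
open Real Set

/-- Rotation by angle `η` in the `(x₁, x₂)`-plane of `ℝ^{N+2}`; it maps `e₁` to
`e(η) = (cos η, sin η, 0, …, 0)`. -/
noncomputable def rotXY {N : ℕ} (η : ℝ) (x : EuclideanSpace ℝ (Fin (N + 2))) :
    EuclideanSpace ℝ (Fin (N + 2)) :=
  WithLp.toLp 2 fun i => if i = 0 then Real.cos η * x 0 - Real.sin η * x 1
    else if i = 1 then Real.sin η * x 0 + Real.cos η * x 1 else x i

/-- Reflection `σ_{e(η)}(x) = x - 2 (x · e(η)) e(η)` across the hyperplane with normal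
`e(η) = (cos η, sin η, 0, …, 0)`. -/
noncomputable def reflXY {N : ℕ} (η : ℝ) (x : EuclideanSpace ℝ (Fin (N + 2))) :
    EuclideanSpace ℝ (Fin (N + 2)) :=
  WithLp.toLp 2 fun i => if i = 0 then x 0 - 2 * (x 0 * Real.cos η + x 1 * Real.sin η) * Real.cos η
    else if i = 1 then x 1 - 2 * (x 0 * Real.cos η + x 1 * Real.sin η) * Real.sin η
    else x i

namespace AsymAux

variable {N : ℕ}

lemma one_ne_zero' : (1 : Fin (N + 2)) ≠ 0 := by
  simp [Fin.ext_iff]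

lemma rot_apply0 (η : ℝ) (x : EuclideanSpace ℝ (Fin (N + 2))) :
    rotXY η x 0 = Real.cos η * x 0 - Real.sin η * x 1 := rfl

lemma rot_apply1 (η : ℝ) (x : EuclideanSpace ℝ (Fin (N + 2))) :
    rotXY η x 1 = Real.sin η * x 0 + Real.cos η * x 1 := by
  simp [rotXY, one_ne_zero']

lemma rot_apply_other (η : ℝ) (x : EuclideanSpace ℝ (Fin (N + 2))) {i : Fin (N + 2)}
    (h0 : i ≠ 0) (h1 : i ≠ 1) : rotXY η x i = x i := by
  simp [rotXY, h0, h1]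

lemma refl_apply0 (η : ℝ) (x : EuclideanSpace ℝ (Fin (N + 2))) :
    reflXY η x 0 = x 0 - 2 * (x 0 * Real.cos η + x 1 * Real.sin η) * Real.cos η := rfl

lemma refl_apply1 (η : ℝ) (x : EuclideanSpace ℝ (Fin (N + 2))) :
    reflXY η x 1 = x 1 - 2 * (x 0 * Real.cos η + x 1 * Real.sin η) * Real.sin η := by
  simp [reflXY, one_ne_zero']

lemma refl_apply_other (η : ℝ) (x : EuclideanSpace ℝ (Fin (N + 2))) {i : Fin (N + 2)}
    (h0 : i ≠ 0) (h1 : i ≠ 1) : reflXY η x i = x i := by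
  simp [reflXY, h0, h1]

lemma refl0_apply0 (x : EuclideanSpace ℝ (Fin (N + 2))) :
    reflXY 0 x 0 = -(x 0) := by
  rw [refl_apply0]; simp; ring

lemma refl0_apply1 (x : EuclideanSpace ℝ (Fin (N + 2))) :
    reflXY 0 x 1 = x 1 := by
  rw [refl_apply1]; simp

lemma rot_zero (x : EuclideanSpace ℝ (Fin (N + 2))) : rotXY 0 x = x := by
  ext i
  by_cases h0 : i = 0
  · subst h0; simp [rot_apply0]
  by_cases h1 : i = 1
  · subst h1; simp [rot_apply1]
  · exact rot_apply_other 0 x h0 h1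

lemma rot_rot (α β : ℝ) (x : EuclideanSpace ℝ (Fin (N + 2))) :
    rotXY α (rotXY β x) = rotXY (α + β) x := by
  ext i
  by_cases h0 : i = 0
  · subst h0
    simp only [rot_apply0, rot_apply1, Real.cos_add, Real.sin_add]
    ring
  by_cases h1 : i = 1
  · subst h1
    simp only [rot_apply1, rot_apply0, Real.cos_add, Real.sin_add]
    ring
  · rw [rot_apply_other α _ h0 h1, rot_apply_other β x h0 h1,
      rot_apply_other (α + β) x h0 h1]

lemma rot_two_pi (α : ℝ) (x : EuclideanSpace ℝ (Fin (N + 2))) :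
    rotXY (α + 2 * π) x = rotXY α x := by
  ext i
  by_cases h0 : i = 0
  · subst h0; simp [rot_apply0, Real.cos_add_two_pi, Real.sin_add_two_pi]
  by_cases h1 : i = 1
  · subst h1; simp [rot_apply1, Real.cos_add_two_pi, Real.sin_add_two_pi]
  · rw [rot_apply_other _ x h0 h1, rot_apply_other _ x h0 h1]

lemma refl0_refl0 (x : EuclideanSpace ℝ (Fin (N + 2))) :
    reflXY 0 (reflXY 0 x) = x := by
  ext i
  by_cases h0 : i = 0
  · subst h0; rw [refl0_apply0, refl0_apply0]; ring
  by_cases h1 : i = 1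
  · subst h1; rw [refl0_apply1, refl0_apply1]
  · rw [refl_apply_other _ _ h0 h1, refl_apply_other _ _ h0 h1]

lemma refl0_eq_self (x : EuclideanSpace ℝ (Fin (N + 2))) (hx : x 0 = 0) :
    reflXY 0 x = x := by
  ext i
  by_cases h0 : i = 0
  · subst h0; rw [refl0_apply0, hx]; ring
  by_cases h1 : i = 1
  · subst h1; rw [refl0_apply1]
  · rw [refl_apply_other _ _ h0 h1]

lemma refl_rot (η : ℝ) (x : EuclideanSpace ℝ (Fin (N + 2))) :
    reflXY η (rotXY η x) = rotXY η (reflXY 0 x) := by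
  ext i
  by_cases h0 : i = 0
  · subst h0
    rw [refl_apply0, rot_apply0, rot_apply1, rot_apply0, refl0_apply0, refl0_apply1]
    linear_combination (-(2 * x 0 * Real.cos η)) * (Real.sin_sq_add_cos_sq η)
  by_cases h1 : i = 1
  · subst h1
    rw [refl_apply1, rot_apply0, rot_apply1, rot_apply1, refl0_apply0, refl0_apply1]
    linear_combination (-(2 * x 0 * Real.sin η)) * (Real.sin_sq_add_cos_sq η)
  · rw [refl_apply_other _ _ h0 h1, rot_apply_other _ _ h0 h1,
      rot_apply_other _ _ h0 h1, refl_apply_other _ _ h0 h1]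

lemma refl0_rot (η : ℝ) (x : EuclideanSpace ℝ (Fin (N + 2))) :
    reflXY 0 (rotXY η x) = rotXY (-η) (reflXY 0 x) := by
  ext i
  by_cases h0 : i = 0
  · subst h0
    rw [refl0_apply0, rot_apply0, rot_apply0, refl0_apply0, refl0_apply1,
      Real.cos_neg, Real.sin_neg]
    ring
  by_cases h1 : i = 1
  · subst h1
    rw [refl0_apply1, rot_apply1, rot_apply1, refl0_apply0, refl0_apply1,
      Real.cos_neg, Real.sin_neg]
    ring
  · rw [refl_apply_other _ _ h0 h1, rot_apply_other _ _ h0 h1,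
      rot_apply_other _ _ h0 h1, refl_apply_other _ _ h0 h1]

lemma core (S : Set (EuclideanSpace ℝ (Fin (N + 2))))
    (hSrot : ∀ η : ℝ, ∀ x ∈ S, rotXY η x ∈ S)
    (z : EuclideanSpace ℝ (Fin (N + 2)) → ℝ)
    (hstar : ∀ y ∈ S, z y = z (reflXY 0 y))
    (ε : ℝ) (hε : 0 < ε)
    (hpos : ∀ η : ℝ, 0 < η → η < ε → ∀ x ∈ S, 0 < x 0 →
      0 < z (rotXY η x) - z (reflXY η (rotXY η x)))
    (x : EuclideanSpace ℝ (Fin (N + 2))) (hx : x ∈ S) (hx0 : 0 < x 0)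
    (η : ℝ) (hsin : 0 < Real.sin η) :
    0 < z (rotXY η x) - z (reflXY η (rotXY η x)) := by
  set w : ℂ := ⟨x 0, x 1⟩ with hw
  have hw0 : w ≠ 0 := by
    intro h
    rw [Complex.ext_iff] at h
    exact absurd h.1 (by simpa using hx0.ne')
  set r := ‖w‖ with hrdef
  set φ := Complex.arg w with hφdef
  have hr : 0 < r := norm_pos_iff.mpr hw0
  have hx0' : x 0 = r * Real.cos φ := by
    rw [hφdef, Complex.cos_arg hw0]
    field_simp
    exact mul_comm _ _
  have hx1' : x 1 = r * Real.sin φ := by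
    rw [hφdef, Complex.sin_arg]
    field_simp
    exact mul_comm _ _
  have hcos : 0 < Real.cos φ := by
    nlinarith [hx0, hx0', hr]
  have hpt0 : ∀ θ : ℝ, rotXY (θ - φ) x 0 = r * Real.cos θ := by
    intro θ
    have e := Real.cos_add (θ - φ) φ
    rw [show θ - φ + φ = θ by ring] at e
    rw [rot_apply0, hx0', hx1', e]; ring
  have hpt1 : ∀ θ : ℝ, rotXY (θ - φ) x 1 = r * Real.sin θ := by
    intro θ
    have e := Real.sin_add (θ - φ) φ
    rw [show θ - φ + φ = θ by ring] at e
    rw [rot_apply1, hx0', hx1', e]; ring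
  have hptS : ∀ θ : ℝ, rotXY (θ - φ) x ∈ S := fun θ => hSrot _ x hx
  have hrotpt : ∀ α θ : ℝ, rotXY α (rotXY (θ - φ) x) = rotXY (θ + α - φ) x := by
    intro α θ
    rw [rot_rot]
    rw [show α + (θ - φ) = θ + α - φ by ring]
  have hneg : ∀ θ : ℝ, reflXY 0 (rotXY (θ - φ) x) = rotXY (π - θ - φ) x := by
    intro θ
    ext i
    by_cases h0 : i = 0
    · subst h0
      rw [refl0_apply0, hpt0, show π - θ - φ = (π - θ) - φ by ring, hpt0,
        Real.cos_pi_sub]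
      ring
    by_cases h1 : i = 1
    · subst h1
      rw [refl0_apply1, hpt1, show π - θ - φ = (π - θ) - φ by ring, hpt1,
        Real.sin_pi_sub]
    · rw [refl_apply_other _ _ h0 h1, rot_apply_other _ _ h0 h1,
        rot_apply_other _ _ h0 h1]
  set g : ℝ → ℝ := fun θ => z (rotXY (θ - φ) x) with hgdef
  have hgper : Function.Periodic g (2 * π) := by
    intro θ
    simp only [hgdef]
    rw [show θ + 2 * π - φ = (θ - φ) + 2 * π by ring, rot_two_pi]
  have hgsym : ∀ θ : ℝ, g (π - θ) = g θ := by
    intro θ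
    simp only [hgdef]
    rw [show π - θ - φ = π - θ - φ from rfl, ← hneg θ]
    exact (hstar _ (hptS θ)).symm
  have hstep : ∀ δ : ℝ, 0 < δ → δ < ε → ∀ θ : ℝ, 0 < Real.cos (θ - δ) →
      g (θ - 2 * δ) < g θ := by
    intro δ hδ0 hδε θ hcosθ
    have hy0 : 0 < rotXY (θ - δ - φ) x 0 := by
      rw [hpt0]; exact mul_pos hr hcosθ
    have h := hpos δ hδ0 hδε _ (hptS (θ - δ)) hy0
    rw [refl_rot, hneg (θ - δ), hrotpt δ (θ - δ), hrotpt δ (π - (θ - δ))] at h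
    rw [show θ - δ + δ - φ = θ - φ by ring,
      show π - (θ - δ) + δ - φ = π - (θ - 2 * δ) - φ by ring] at h
    have e := hgsym (θ - 2 * δ)
    simp only [hgdef] at e ⊢
    linarith [h, e]
  have hmono_aux : ∀ n : ℕ, ∀ a b : ℝ, -(π/2) ≤ a → b ≤ π/2 → a < b →
      b - a ≤ (n + 1) * ε → g a < g b := by
    intro n
    induction n with
    | zero =>
      intro a b ha hb hab hle
      norm_num at hle
      have h1 : 0 < (b - a)/2 := by linarith
      have h2 : (b - a)/2 < ε := by linarith
      have h3 : 0 < Real.cos (b - (b - a)/2) := by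
        apply Real.cos_pos_of_mem_Ioo
        constructor
        · linarith
        · linarith
      have := hstep ((b - a)/2) h1 h2 b h3
      rw [show b - 2 * ((b - a)/2) = a by ring] at this
      exact this
    | succ n ih =>
      intro a b ha hb hab hle
      by_cases hc : b - a ≤ (n + 1) * ε
      · exact ih a b ha hb hab hc
      · push_neg at hc
        have hn1 : (1:ℝ) ≤ (n:ℝ) + 1 := by have := Nat.cast_nonneg (α := ℝ) n; linarith
        have hεle : ε ≤ (n + 1) * ε := by nlinarith
        have hac : a < b - ε := by linarith
        have g1 : g a < g (b - ε) := by
          apply ih a (b - ε) ha (by linarith) hac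
          push_cast at hle ⊢
          linarith
        have h3 : 0 < Real.cos (b - ε/2) := by
          apply Real.cos_pos_of_mem_Ioo
          constructor
          · linarith
          · linarith
        have g2 := hstep (ε/2) (by linarith) (by linarith) b h3
        rw [show b - 2 * (ε/2) = b - ε by ring] at g2
        linarith
  have hmono : ∀ a b : ℝ, -(π/2) ≤ a → b ≤ π/2 → a < b → g a < g b := by
    intro a b ha hb hab
    obtain ⟨n, hn⟩ := exists_nat_ge ((b - a)/ε)
    apply hmono_aux n a b ha hb hab
    rw [div_le_iff₀ hε] at hn
    nlinarith
  have hgsin : ∀ θ : ℝ, g θ = g (Real.arcsin (Real.sin θ)) := by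
    intro θ
    have h2π : (0:ℝ) < 2 * π := by linarith [Real.pi_pos]
    set k : ℤ := ⌈(θ - 3*π/2) / (2*π)⌉ with hk
    have hkle : (θ - 3*π/2) / (2*π) ≤ (k:ℝ) := Int.le_ceil _
    have hklt : (k:ℝ) < (θ - 3*π/2) / (2*π) + 1 := Int.ceil_lt_add_one _
    rw [div_le_iff₀ h2π] at hkle
    have hklt' : ((k:ℝ) - 1) * (2*π) < θ - 3*π/2 := by
      rw [← lt_div_iff₀ h2π]; linarith
    set θ' := θ - (k:ℝ) * (2*π) with hθ'
    have h1 : -(π/2) < θ' := by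
      rw [hθ']
      have hπ := Real.pi_pos
      nlinarith [hklt']
    have h2 : θ' ≤ 3*π/2 := by
      rw [hθ']; linarith
    have hgθ : g θ' = g θ := hgper.sub_int_mul_eq k
    have hsθ : Real.sin θ' = Real.sin θ := Real.sin_periodic.sub_int_mul_eq k
    by_cases hc : θ' ≤ π/2
    · rw [← hgθ, ← hsθ, Real.arcsin_sin (le_of_lt h1) hc]
    · push_neg at hc
      have e1 : Real.sin θ' = Real.sin (π - θ') := (Real.sin_pi_sub θ').symm
      have h3 : -(π/2) ≤ π - θ' := by linarith
      have h4 : π - θ' ≤ π/2 := by linarith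
      rw [← hgθ, ← hsθ, e1, Real.arcsin_sin h3 h4, hgsym]
  have e1 : rotXY η x = rotXY (φ + η - φ) x := by
    rw [show φ + η - φ = η by ring]
  have e2 : reflXY η (rotXY η x) = rotXY (π - φ + η - φ) x := by
    rw [refl_rot]
    have hx' : reflXY 0 x = rotXY (π - φ - φ) x := by
      have := hneg φ
      rwa [show φ - φ = (0:ℝ) by ring, rot_zero] at this
    rw [hx', rot_rot, show η + (π - φ - φ) = π - φ + η - φ by ring]
  rw [e2, e1]
  have key : g (π - φ + η) < g (φ + η) := by
    have hs : Real.sin (π - φ + η) < Real.sin (φ + η) := by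
      have e := Real.sin_pi_sub (φ - η)
      rw [show π - (φ - η) = π - φ + η by ring] at e
      rw [e, Real.sin_sub, Real.sin_add]
      nlinarith [mul_pos hcos hsin]
    have hlt : Real.arcsin (Real.sin (π - φ + η)) < Real.arcsin (Real.sin (φ + η)) :=
      Real.strictMonoOn_arcsin ⟨Real.neg_one_le_sin _, Real.sin_le_one _⟩
        ⟨Real.neg_one_le_sin _, Real.sin_le_one _⟩ hs
    calc g (π - φ + η) = g (Real.arcsin (Real.sin (π - φ + η))) := hgsin _
      _ < g (Real.arcsin (Real.sin (φ + η))) :=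
        hmono _ _ (Real.neg_pi_div_two_le_arcsin _) (Real.arcsin_le_pi_div_two _) hlt
      _ = g (φ + η) := (hgsin _).symm
  simp only [hgdef] at key
  linarith

lemma star_lemma (S : Set (EuclideanSpace ℝ (Fin (N + 2))))
    (hSrefl : ∀ η : ℝ, ∀ x ∈ S, reflXY η x ∈ S)
    (z : EuclideanSpace ℝ (Fin (N + 2)) → ℝ)
    (h0 : ∀ x ∈ S, 0 < x 0 → z (rotXY 0 x) - z (reflXY 0 (rotXY 0 x)) = 0) :
    ∀ y ∈ S, z y = z (reflXY 0 y) := by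
  intro y hy
  rcases lt_trichotomy (y 0) 0 with h | h | h
  · have hyS : reflXY 0 y ∈ S := hSrefl 0 y hy
    have h2 := h0 (reflXY 0 y) hyS (by rw [refl0_apply0]; linarith)
    rw [rot_zero, refl0_refl0] at h2
    linarith
  · rw [refl0_eq_self y h]
  · have h2 := h0 y hy h
    rw [rot_zero] at h2
    linarith

end AsymAux

open AsymAux in
theorem asymptotic_symmetry_stmt_6 {N : ℕ}
    (S : Set (EuclideanSpace ℝ (Fin (N + 2)))) (hSopen : IsOpen S)
    (hSrad : ∀ f : EuclideanSpace ℝ (Fin (N + 2)) ≃ₗᵢ[ℝ] EuclideanSpace ℝ (Fin (N + 2)),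
      f '' S = S)
    (hSrot : ∀ η : ℝ, ∀ x ∈ S, rotXY η x ∈ S)
    (hSrefl : ∀ η : ℝ, ∀ x ∈ S, reflXY η x ∈ S)
    (z : EuclideanSpace ℝ (Fin (N + 2)) → ℝ) (hz : ContinuousOn z S)
    (h0 : ∀ x ∈ S, 0 < x 0 → z (rotXY 0 x) - z (reflXY 0 (rotXY 0 x)) = 0)
    (ε : ℝ) (hε : 0 < ε) (hεπ : ε < π)
    (hpos : ∀ η : ℝ, 0 < η → η < ε → ∀ x ∈ S, 0 < x 0 →
      0 < z (rotXY η x) - z (reflXY η (rotXY η x))) :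
    (∀ η : ℝ, 0 < η → η < π → ∀ x ∈ S, 0 < x 0 →
      0 < z (rotXY η x) - z (reflXY η (rotXY η x))) ∧
    (∀ η : ℝ, -π < η → η < 0 → ∀ x ∈ S, 0 < x 0 →
      z (rotXY η x) - z (reflXY η (rotXY η x)) < 0) := by
  have hstar : ∀ y ∈ S, z y = z (reflXY 0 y) := star_lemma S hSrefl z h0
  constructor
  · intro η hη1 hη2 x hx hx0
    exact core S hSrot z hstar ε hε hpos x hx hx0 η
      (Real.sin_pos_of_pos_of_lt_pi hη1 hη2)
  · intro η hη1 hη2 x hx hx0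
    have hsin : 0 < Real.sin (-η) := by
      rw [Real.sin_neg]
      have : Real.sin η < 0 := Real.sin_neg_of_neg_of_neg_pi_lt hη2 hη1
      linarith
    have h := core S hSrot z hstar ε hε hpos x hx hx0 (-η) hsin
    -- h : 0 < z (rotXY (-η) x) - z (reflXY (-η) (rotXY (-η) x))
    -- relate w(η, x) = - w(-η, x)
    have hxrS : rotXY η x ∈ S := hSrot η x hx
    have hfxS : reflXY 0 x ∈ S := hSrefl 0 x hx
    have hrfS : rotXY η (reflXY 0 x) ∈ S := hSrot η _ hfxS
    have e1 : z (rotXY η x) = z (rotXY (-η) (reflXY 0 x)) := by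
      rw [hstar _ hxrS, refl0_rot]
    have e2 : z (reflXY η (rotXY η x)) = z (rotXY (-η) x) := by
      rw [refl_rot, hstar _ hrfS, refl0_rot, refl0_refl0]
    have e3 : z (reflXY (-η) (rotXY (-η) x)) = z (rotXY (-η) (reflXY 0 x)) := by
      rw [refl_rot]
    rw [e3] at h
    rw [e1, e2]
    linarith
end

section
/- Let z : ℝ^N → ℝ (N ≥ 1) be continuous with z(x) → 0 as |x| → ∞. Suppose there exist λ₀ > 0 and e₁ = (1,0,…,0) such that z(x) ≥ z(2λe₁ - x) for all x with x·e₁ > λ and all λ ∈ (-λ₀, λ₀). If z is even in x₁ (i.e., z(x₁, x') = z(-x₁, x') for all x), then z cannot satisfy z(r e₁) < 0 for any r > 0; more precisely, if z(re₁) < 0 for some r > 0 then choosing λ ∈ (0, min{r, λ₀}) and iterating the reflection inequality yields z(re₁) ≥ z((2kλ + r)e₁) for all k ∈ ℕ, contradicting the decay at infinity; hence z ≥ 0 on the positive x₁-axis. -/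
open Real Set

theorem asymptotic_symmetry_stmt_19 {N : ℕ}
    (z : EuclideanSpace ℝ (Fin (N + 1)) → ℝ) (hz : Continuous z)
    (hdecay : Filter.Tendsto z (Filter.cocompact (EuclideanSpace ℝ (Fin (N + 1)))) (nhds 0))
    (lam0 : ℝ) (hlam0 : 0 < lam0)
    (hrefl : ∀ lam : ℝ, -lam0 < lam → lam < lam0 →
      ∀ x : EuclideanSpace ℝ (Fin (N + 1)),
        lam < (inner ℝ x (EuclideanSpace.single 0 1 : EuclideanSpace ℝ (Fin (N + 1))) : ℝ) →
        z ((2 * lam) • (EuclideanSpace.single 0 1 : EuclideanSpace ℝ (Fin (N + 1))) - x)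
          ≤ z x)
    (heven : ∀ x : EuclideanSpace ℝ (Fin (N + 1)),
      z (x - (2 * (inner ℝ x (EuclideanSpace.single 0 1 :
          EuclideanSpace ℝ (Fin (N + 1))) : ℝ)) •
        (EuclideanSpace.single 0 1 : EuclideanSpace ℝ (Fin (N + 1)))) = z x) :
    ∀ r : ℝ, 0 < r →
      0 ≤ z (r • (EuclideanSpace.single 0 1 : EuclideanSpace ℝ (Fin (N + 1)))) := by
  intro r hr
  set e : EuclideanSpace ℝ (Fin (N + 1)) := EuclideanSpace.single 0 1 with he
  have hee : (inner ℝ e e : ℝ) = 1 := by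
    rw [real_inner_self_eq_norm_sq, EuclideanSpace.norm_single]
    norm_num
  have hinner : ∀ t : ℝ, (inner ℝ (t • e) e : ℝ) = t := by
    intro t
    rw [real_inner_smul_left, hee, mul_one]
  set μ : ℝ := lam0 / 2 with hμ
  have hμpos : 0 < μ := by positivity
  -- one step: z((s + 2μ) • e) ≤ z(s • e) for s > 0
  have step : ∀ s : ℝ, 0 < s → z ((s + 2 * μ) • e) ≤ z (s • e) := by
    intro s hs
    have h1 := hrefl (-μ) (by linarith) (by linarith) (s • e)
      (by rw [hinner]; linarith)
    have h2 : (2 * -μ) • e - s • e = (-(s + 2 * μ)) • e := by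
      rw [← sub_smul]; ring_nf
    rw [h2] at h1
    have h3 := heven ((-(s + 2 * μ)) • e)
    rw [hinner] at h3
    have h4 : (-(s + 2 * μ)) • e - (2 * -(s + 2 * μ)) • e = (s + 2 * μ) • e := by
      rw [← sub_smul]; ring_nf
    rw [h4] at h3
    linarith [h1, h3.symm.le]
  -- iterate
  have iter : ∀ k : ℕ, z ((r + 2 * μ * k) • e) ≤ z (r • e) := by
    intro k
    induction k with
    | zero => simp
    | succ n ih =>
        have hpos : 0 < r + 2 * μ * n := by positivity
        have := step _ hpos
        have heq : (r + 2 * μ * n + 2 * μ) = r + 2 * μ * (n + 1) := by ring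
        rw [heq] at this
        push_cast
        exact le_trans this ih
  -- the sequence goes to cocompact
  have hnorm : ∀ t : ℝ, ‖t • e‖ = |t| := by
    intro t
    rw [norm_smul, EuclideanSpace.norm_single, norm_one, mul_one, Real.norm_eq_abs]
  have htend : Filter.Tendsto (fun k : ℕ => ((r + 2 * μ * k) • e :
      EuclideanSpace ℝ (Fin (N + 1)))) Filter.atTop
      (Filter.cocompact (EuclideanSpace ℝ (Fin (N + 1)))) := by
    apply tendsto_cocompact_of_tendsto_dist_comp_atTop (0 : EuclideanSpace ℝ (Fin (N + 1)))
    simp only [dist_zero_right, hnorm]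
    have h5 : Filter.Tendsto (fun k : ℕ => r + 2 * μ * (k : ℝ)) Filter.atTop Filter.atTop := by
      apply Filter.tendsto_atTop_add_const_left
      exact (tendsto_natCast_atTop_atTop).const_mul_atTop (by positivity)
    refine h5.congr (fun k => ?_)
    rw [abs_of_pos (by positivity)]
  have hlim : Filter.Tendsto (fun k : ℕ => z ((r + 2 * μ * k) • e)) Filter.atTop (nhds 0) :=
    hdecay.comp htend
  exact le_of_tendsto' hlim iter
end
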